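/- Let X be a finite set of points in P^{n_1} × ⋯ × P^{n_k} with Hilbert function H_X. If there exists l ∈ {1,...,k} and j ∈ N^k with j - 2e_l ∈ N^k such that H_X(j) = H_X(j - e_l) = H_X(j - 2e_l), then the defining ideal I_X has no minimal generator of degree j; equivalently, (I_X)_j = R_{e_l}·(I_X)_{j - e_l}. -/

import Mathlib

open MvPolynomial

namespace MultiProjPoints

/-- The variable set of the multigraded coordinate ring of
`ℙ^{n 0} × ⋯ × ℙ^{n (k-1)}`: variables `x_{i,j}` with `i : Fin k`, `0 ≤ j ≤ n i`. -/
abbrev Var (k : ℕ) (n : Fin k → ℕ) := Σ i : Fin k, Fin (n i + 1)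

/-- The `ℕ^k`-grading weight: `deg x_{i,j} = e_i`. -/
def wt (k : ℕ) (n : Fin k → ℕ) : Var k n → (Fin k → ℕ) := fun v => Pi.single v.1 1

/-- The `i`-th standard basis vector of `ℕ^k`. -/
def e {k : ℕ} (l : Fin k) : Fin k → ℕ := Pi.single l 1

variable (K : Type) [Field K]

/-- The graded piece `R_d` of the `ℕ^k`-graded polynomial ring. -/
noncomputable def piece (k : ℕ) (n : Fin k → ℕ) (d : Fin k → ℕ) :
    Submodule K (MvPolynomial (Var k n) K) :=
  weightedHomogeneousSubmodule K (wt k n) d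

/-- `N(d) = ∏ binom (n i + d i) (d i)`, the dimension of `R_d`. -/
def NN (k : ℕ) (n : Fin k → ℕ) (d : Fin k → ℕ) : ℕ := ∏ i, (n i + d i).choose (d i)

/-- A (representative of a) point of `ℙ^{n 0} × ⋯ × ℙ^{n (k-1)}`. -/
def PointRep (k : ℕ) (n : Fin k → ℕ) := (i : Fin k) → Fin (n i + 1) → K

/-- A valid representative: every coordinate block is nonzero. -/
def IsRep {k : ℕ} {n : Fin k → ℕ} (P : PointRep K k n) : Prop := ∀ i, P i ≠ 0

/-- Two representatives define the same point of multi-projective space. -/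
def ProjEq {k : ℕ} {n : Fin k → ℕ} (P Q : PointRep K k n) : Prop :=
  ∀ i, ∃ c : K, c ≠ 0 ∧ P i = c • Q i

/-- A tuple of representatives giving `s` distinct points. -/
def SPoints {k : ℕ} {n : Fin k → ℕ} {s : ℕ} (P : Fin s → PointRep K k n) : Prop :=
  (∀ a, IsRep K (P a)) ∧ ∀ a b, a ≠ b → ¬ ProjEq K (P a) (P b)

/-- The defining ideal `I_X` of the set of points: all polynomials vanishing on
the multi-cone over the points, i.e. the intersection of the point ideals. -/
noncomputable def idealOfPoints {k : ℕ} {n : Fin k → ℕ} {s : ℕ}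
    (P : Fin s → PointRep K k n) : Ideal (MvPolynomial (Var k n) K) :=
  ⨅ (a : Fin s), ⨅ (c : Fin k → K),
    RingHom.ker (eval (fun v : Var k n => c v.1 * P a v.1 v.2))

/-- The degree-`d` piece `I_d` of an ideal, as a `K`-subspace. -/
noncomputable def idealPiece {k : ℕ} {n : Fin k → ℕ}
    (I : Ideal (MvPolynomial (Var k n) K)) (d : Fin k → ℕ) :
    Submodule K (MvPolynomial (Var k n) K) :=
  (Submodule.restrictScalars K I) ⊓ piece K k n d

/-- The multigraded Hilbert function of `X`:
`H_X(d) = dim (R/I_X)_d = dim R_d - dim (I_X)_d`. -/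
noncomputable def hilbert {k : ℕ} {n : Fin k → ℕ} {s : ℕ}
    (P : Fin s → PointRep K k n) (d : Fin k → ℕ) : ℕ :=
  NN k n d - Module.finrank K (idealPiece K (idealOfPoints K P) d)

/-- Generic position: `s` distinct points whose Hilbert function is maximal. -/
def GenericPosition {k : ℕ} {n : Fin k → ℕ} {s : ℕ} (P : Fin s → PointRep K k n) : Prop :=
  SPoints K P ∧ ∀ d : Fin k → ℕ, hilbert K P d = min (NN k n d) s

/-- `R_{e_l}·V`: the span of all products of a variable of degree `e_l`
with an element of `V`. -/
noncomputable def mulSpan {k : ℕ} {n : Fin k → ℕ} (l : Fin k)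
    (V : Submodule K (MvPolynomial (Var k n) K)) :
    Submodule K (MvPolynomial (Var k n) K) :=
  Submodule.span K {g | ∃ (m : Fin (n l + 1)) (f : MvPolynomial (Var k n) K),
    f ∈ V ∧ g = X (⟨l, m⟩ : Var k n) * f}

/-- `D = min { i ∈ ℕ^k | N(i) > s }` (minimal elements for the componentwise order). -/
def Dset (k : ℕ) (n : Fin k → ℕ) (s : ℕ) : Set (Fin k → ℕ) :=
  {i | s < NN k n i ∧ ∀ j : Fin k → ℕ, s < NN k n j → j ≤ i → j = i}

/-- The irrelevant maximal ideal of `R`, generated by all the variables. -/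
noncomputable def irrelevant (k : ℕ) (n : Fin k → ℕ) : Ideal (MvPolynomial (Var k n) K) :=
  Ideal.span (Set.range (X : Var k n → MvPolynomial (Var k n) K))

section Aux
open Finsupp

variable {K : Type} [Field K] {k : ℕ} {n : Fin k → ℕ}

lemma weight_wt_apply (μ : Var k n →₀ ℕ) (i : Fin k) :
    Finsupp.weight (wt k n) μ i = ∑ m : Fin (n i + 1), μ ⟨i, m⟩ := by
  classical
  rw [Finsupp.weight_apply, Finsupp.sum_fintype _ _ (by intro v; simp)]
  rw [Finset.sum_apply]
  have : ∀ v : Var k n, (μ v • wt k n v) i = if v.1 = i then μ v else 0 := by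
    intro v
    by_cases h : v.1 = i
    · subst h; simp [wt]
    · simp [wt, h, Pi.single_eq_of_ne h]
  simp_rw [this]
  rw [← Finset.univ_sigma_univ, Finset.sum_sigma]
  rw [Finset.sum_eq_single i]
  · simp
  · intro b _ hb
    simp [hb]
  · simp

end Aux
section Aux2
variable {K : Type} [Field K] {k : ℕ} {n : Fin k → ℕ}

lemma e_add_sub {d : Fin k → ℕ} {l : Fin k} (hd : 1 ≤ d l) : e l + (d - e l) = d := by
  funext i
  by_cases h : i = l
  · subst h; simp [e, Pi.single_eq_same]; omega
  · simp [e, Pi.single_eq_of_ne h]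

lemma eval_scale {d : Fin k → ℕ} {f : MvPolynomial (Var k n) K}
    (hf : f ∈ piece K k n d) (c : Fin k → K) (Q : Var k n → K) :
    eval (fun v => c v.1 * Q v) f = (∏ i, c i ^ d i) * eval Q f := by
  classical
  rw [eval_eq', eval_eq', Finset.mul_sum]
  apply Finset.sum_congr rfl
  intro μ hμ
  have hwd : Finsupp.weight (wt k n) μ = d := hf (MvPolynomial.mem_support_iff.mp hμ)
  have : (∏ v : Var k n, (c v.1 * Q v) ^ μ v)
      = (∏ i, c i ^ d i) * ∏ v : Var k n, Q v ^ μ v := by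
    rw [Finset.prod_congr rfl (fun v _ => mul_pow (c v.1) (Q v) (μ v)),
      Finset.prod_mul_distrib]
    congr 1
    rw [← Finset.univ_sigma_univ, Finset.prod_sigma]
    apply Finset.prod_congr rfl
    intro i _
    rw [← hwd, weight_wt_apply, ← Finset.prod_pow_eq_pow_sum]
  rw [this]; ring

lemma mem_ideal_iff {s : ℕ} {P : Fin s → PointRep K k n} {d : Fin k → ℕ}
    {f : MvPolynomial (Var k n) K} (hf : f ∈ piece K k n d) :
    f ∈ idealOfPoints K P ↔ ∀ a, eval (fun v : Var k n => P a v.1 v.2) f = 0 := by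
  simp only [idealOfPoints, Ideal.mem_iInf, RingHom.mem_ker]
  constructor
  · intro h a
    have := h a (fun _ => 1)
    simpa using this
  · intro h a c
    rw [eval_scale hf c (fun v : Var k n => P a v.1 v.2) , h a, mul_zero]

end Aux2
section Dim
open Finsupp

/-- monomials of degree `D` in `m` variables correspond to `Sym (Fin m) D`. -/
noncomputable def symEquiv (m D : ℕ) : {τ : Fin m → ℕ // ∑ x, τ x = D} ≃ Sym (Fin m) D where
  toFun τ := ⟨Finsupp.toMultiset (Finsupp.equivFunOnFinite.symm τ.1), by
    rw [Finsupp.card_toMultiset, Finsupp.sum_fintype _ _ (fun _ => rfl)]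
    exact τ.2⟩
  invFun s := ⟨fun x => s.1.count x, by
    rw [Multiset.sum_count_eq_card (fun a _ => Finset.mem_univ a)]
    exact s.2⟩
  left_inv τ := by
    ext x
    show Multiset.count x (Finsupp.toMultiset (Finsupp.equivFunOnFinite.symm τ.1)) = τ.1 x
    rw [Finsupp.count_toMultiset]
    rfl
  right_inv s := by
    ext : 1
    show Finsupp.toMultiset (Finsupp.equivFunOnFinite.symm fun x => s.1.count x) = s.1
    refine Multiset.ext.2 fun a => ?_
    rw [Finsupp.count_toMultiset]
    rfl

lemma card_sym_fun (m D : ℕ) [NeZero m] :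
    Nat.card {τ : Fin m → ℕ // ∑ x, τ x = D} = (m - 1 + D).choose D := by
  rw [Nat.card_congr (symEquiv m D), Nat.card_eq_fintype_card, Sym.card_sym_eq_choose]
  simp only [Fintype.card_fin]
  congr 1
  have := NeZero.pos m
  omega

end Dim

section Dim2
variable {K : Type} [Field K] {k : ℕ} {n : Fin k → ℕ}

noncomputable def monEquiv (k : ℕ) (n : Fin k → ℕ) (d : Fin k → ℕ) :
    {μ : Var k n →₀ ℕ // Finsupp.weight (wt k n) μ = d}
      ≃ Π i, {τ : Fin (n i + 1) → ℕ // ∑ x, τ x = d i} where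
  toFun μ i := ⟨fun m => μ.1 ⟨i, m⟩, by
    rw [← weight_wt_apply μ.1 i, μ.2]⟩
  invFun τ := ⟨Finsupp.equivFunOnFinite.symm fun v => (τ v.1).1 v.2, by
    funext i
    rw [weight_wt_apply]
    exact (τ i).2⟩
  left_inv μ := by
    ext v
    rfl
  right_inv τ := by
    ext i m
    rfl

instance (m D : ℕ) : Finite {τ : Fin m → ℕ // ∑ x, τ x = D} :=
  Finite.of_equiv _ (symEquiv m D).symm

lemma card_weight (d : Fin k → ℕ) :
    Nat.card {μ : Var k n →₀ ℕ // Finsupp.weight (wt k n) μ = d} = NN k n d := by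
  rw [Nat.card_congr (monEquiv k n d), Nat.card_pi]
  unfold NN
  refine Finset.prod_congr rfl fun i _ => ?_
  rw [card_sym_fun (n i + 1) (d i)]
  simp

lemma finrank_piece (d : Fin k → ℕ) :
    Module.finrank K (piece K k n d) = NN k n d := by
  classical
  haveI : Finite {μ : Var k n →₀ ℕ // Finsupp.weight (wt k n) μ = d} :=
    Finite.of_equiv _ (monEquiv k n d).symm
  let E : piece K k n d ≃ₗ[K]
      ({d' : Var k n →₀ ℕ | Finsupp.weight (wt k n) d' = d} →₀ K) :=
    (LinearEquiv.ofEq _ _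
      (weightedHomogeneousSubmodule_eq_finsupp_supported K (wt k n) d)).trans
      (AddMonoidAlgebra.supportedEquivFinsupp _)
  haveI : Finite {d' : Var k n →₀ ℕ | Finsupp.weight (wt k n) d' = d} := by
    assumption
  let E2 := E.trans (Finsupp.linearEquivFunOnFinite K K _)
  haveI := Fintype.ofFinite {d' : Var k n →₀ ℕ | Finsupp.weight (wt k n) d' = d}
  rw [E2.finrank_eq, Module.finrank_fintype_fun_eq_card,
    ← Nat.card_eq_fintype_card]
  exact card_weight d

instance finiteDimensional_piece (d : Fin k → ℕ) :
    FiniteDimensional K (piece K k n d) := by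
  classical
  haveI : Finite {μ : Var k n →₀ ℕ // Finsupp.weight (wt k n) μ = d} :=
    Finite.of_equiv _ (monEquiv k n d).symm
  let E : piece K k n d ≃ₗ[K]
      ({d' : Var k n →₀ ℕ | Finsupp.weight (wt k n) d' = d} →₀ K) :=
    (LinearEquiv.ofEq _ _
      (weightedHomogeneousSubmodule_eq_finsupp_supported K (wt k n) d)).trans
      (AddMonoidAlgebra.supportedEquivFinsupp _)
  haveI : Finite {d' : Var k n →₀ ℕ | Finsupp.weight (wt k n) d' = d} := by assumption
  haveI := Fintype.ofFinite {d' : Var k n →₀ ℕ | Finsupp.weight (wt k n) d' = d}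
  exact Module.Finite.equiv (E.trans (Finsupp.linearEquivFunOnFinite K K _)).symm

end Dim2
section Rank
variable {K : Type} [Field K] {k : ℕ} {n : Fin k → ℕ} {s : ℕ}

/-- Evaluation at the representative points, as a linear map on a graded piece. -/
noncomputable def Phi (P : Fin s → PointRep K k n) (d : Fin k → ℕ) :
    piece K k n d →ₗ[K] (Fin s → K) where
  toFun f a := eval (fun v : Var k n => P a v.1 v.2) f.1
  map_add' f g := by funext a; simp
  map_smul' c f := by
    funext a
    simp only [Submodule.coe_smul, RingHom.id_apply, Pi.smul_apply, smul_eq_mul]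
    rw [smul_eval]

lemma Phi_apply (P : Fin s → PointRep K k n) (d : Fin k → ℕ) (f : piece K k n d) (a : Fin s) :
    Phi P d f a = eval (fun v : Var k n => P a v.1 v.2) f.1 := rfl

lemma idealPiece_eq (P : Fin s → PointRep K k n) (d : Fin k → ℕ) :
    idealPiece K (idealOfPoints K P) d
      = (LinearMap.ker (Phi P d)).map (piece K k n d).subtype := by
  ext f
  simp only [idealPiece, Submodule.mem_inf, Submodule.restrictScalars_mem,
    Submodule.mem_map, LinearMap.mem_ker]
  constructor
  · rintro ⟨hI, hp⟩
    exact ⟨⟨f, hp⟩, by funext a; rw [Phi_apply, Pi.zero_apply]; exact (mem_ideal_iff hp).1 hI a, rfl⟩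
  · rintro ⟨⟨g, hg⟩, h0, rfl⟩
    exact ⟨(mem_ideal_iff hg).2 fun a => congrFun h0 a, hg⟩

lemma hilbert_eq_rank (P : Fin s → PointRep K k n) (d : Fin k → ℕ) :
    hilbert K P d = Module.finrank K (LinearMap.range (Phi P d)) := by
  unfold hilbert
  rw [idealPiece_eq, Submodule.finrank_map_subtype_eq]
  have h := LinearMap.finrank_range_add_finrank_ker (Phi P d)
  rw [finrank_piece] at h
  omega

lemma exists_lform [Infinite K] (P : Fin s → PointRep K k n) (hP : ∀ a, IsRep K (P a))
    (l : Fin k) : ∃ lam : Fin (n l + 1) → K, ∀ a, (∑ m, lam m * P a l m) ≠ 0 := by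
  classical
  by_contra hcon
  push_neg at hcon
  set F : MvPolynomial (Fin (n l + 1)) K :=
    ∏ a, (∑ m, MvPolynomial.C (P a l m) * MvPolynomial.X m) with hF
  have hzero : ∀ x : Fin (n l + 1) → K, eval x F = 0 := by
    intro x
    obtain ⟨a, ha⟩ := hcon x
    rw [hF, map_prod]
    apply Finset.prod_eq_zero (Finset.mem_univ a)
    rw [map_sum, ← ha]
    apply Finset.sum_congr rfl
    intro m _
    simp [mul_comm]
  have hF0 : F = 0 := by
    apply MvPolynomial.funext
    intro x
    rw [hzero x, map_zero]
  have : ∃ a, (∑ m, MvPolynomial.C (P a l m) * MvPolynomial.X m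
      : MvPolynomial (Fin (n l + 1)) K) = 0 := by
    by_contra hne
    push_neg at hne
    exact Finset.prod_ne_zero_iff.2 (fun a _ => hne a) hF0
  obtain ⟨a, ha⟩ := this
  apply hP a l
  funext m
  have := congrArg (eval (fun m' => if m' = m then (1 : K) else 0)) ha
  simp only [Finset.sum_ite_eq', mul_ite, map_zero] at this
  simpa using this
end Rank
section Step
variable {K : Type} [Field K] {k : ℕ} {n : Fin k → ℕ} {s : ℕ}

lemma lform_mem_piece (l : Fin k) (lam : Fin (n l + 1) → K) :
    (∑ m, MvPolynomial.C (lam m) * MvPolynomial.X (⟨l, m⟩ : Var k n))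
      ∈ piece K k n (e l) := by
  apply Submodule.sum_mem
  intro m _
  have hx : (MvPolynomial.X (⟨l, m⟩ : Var k n) : MvPolynomial (Var k n) K)
      ∈ piece K k n (e l) := by
    have := isWeightedHomogeneous_X K (wt k n) (⟨l, m⟩ : Var k n)
    exact this
  have := (piece K k n (e l)).smul_mem (lam m) hx
  simpa [smul_eq_C_mul] using this

lemma eval_lform (P : Fin s → PointRep K k n) (l : Fin k) (lam : Fin (n l + 1) → K)
    (a : Fin s) :
    eval (fun v : Var k n => P a v.1 v.2)
        (∑ m, MvPolynomial.C (lam m) * MvPolynomial.X (⟨l, m⟩ : Var k n))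
      = ∑ m, lam m * P a l m := by
  simp

lemma step_surj (P : Fin s → PointRep K k n) (l : Fin k) (d2 : Fin k → ℕ)
    (lam : Fin (n l + 1) → K) (hlam : ∀ a, (∑ m, lam m * P a l m) ≠ 0)
    (hh : hilbert K P (e l + d2) = hilbert K P d2)
    {g : MvPolynomial (Var k n) K} (hg : g ∈ piece K k n (e l + d2)) :
    ∃ f ∈ piece K k n d2,
      g - (∑ m, MvPolynomial.C (lam m) * MvPolynomial.X (⟨l, m⟩ : Var k n)) * f
        ∈ idealOfPoints K P := by
  classical
  set L : MvPolynomial (Var k n) K :=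
    ∑ m, MvPolynomial.C (lam m) * MvPolynomial.X (⟨l, m⟩ : Var k n) with hLdef
  have hL : L ∈ piece K k n (e l) := lform_mem_piece l lam
  -- the diagonal scaling equivalence
  let D : (Fin s → K) ≃ₗ[K] (Fin s → K) :=
    LinearEquiv.piCongrRight fun a =>
      LinearEquiv.smulOfNeZero K K _ (hlam a)
  -- the image of multiplication-by-L inside the range of `Phi (e l + d2)`
  have hsub : (LinearMap.range (Phi P d2)).map (D : (Fin s → K) →ₗ[K] (Fin s → K))
      ≤ LinearMap.range (Phi P (e l + d2)) := by
    rintro y ⟨x, ⟨f, rfl⟩, rfl⟩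
    refine ⟨⟨L * f.1, hL.mul f.2⟩, ?_⟩
    funext a
    rw [Phi_apply]
    show eval _ (L * f.1) = _
    rw [map_mul]
    simp only [D, LinearEquiv.coe_coe, LinearEquiv.piCongrRight_apply]
    rw [hLdef, eval_lform]
    rfl
  have hrank : Module.finrank K ((LinearMap.range (Phi P d2)).map
      (D : (Fin s → K) →ₗ[K] (Fin s → K)))
      = Module.finrank K (LinearMap.range (Phi P (e l + d2))) := by
    rw [LinearEquiv.finrank_map_eq, ← hilbert_eq_rank, ← hilbert_eq_rank, hh]
  have heq : (LinearMap.range (Phi P d2)).map (D : (Fin s → K) →ₗ[K] (Fin s → K))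
      = LinearMap.range (Phi P (e l + d2)) :=
    Submodule.eq_of_le_of_finrank_le hsub (le_of_eq hrank.symm)
  have hmem : Phi P (e l + d2) ⟨g, hg⟩ ∈ (LinearMap.range (Phi P d2)).map
      (D : (Fin s → K) →ₗ[K] (Fin s → K)) := by
    rw [heq]; exact ⟨_, rfl⟩
  obtain ⟨x, ⟨f, rfl⟩, hDx⟩ := hmem
  refine ⟨f.1, f.2, ?_⟩
  have hpc : g - L * f.1 ∈ piece K k n (e l + d2) :=
    Submodule.sub_mem _ hg (hL.mul f.2)
  rw [mem_ideal_iff hpc]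
  intro a
  have := congrFun hDx a
  simp only [D, LinearEquiv.coe_coe, LinearEquiv.piCongrRight_apply] at this
  rw [map_sub, map_mul, hLdef, eval_lform]
  have this2 : (∑ m, lam m * P a l m) * (eval fun v : Var k n => P a v.1 v.2) f.1
      = (eval fun v : Var k n => P a v.1 v.2) g := this
  rw [this2]
  ring

end Step
section Decomp
variable {K : Type} [Field K] {k : ℕ} {n : Fin k → ℕ}

lemma weight_single_var (v : Var k n) :
    Finsupp.weight (wt k n) (Finsupp.single v 1) = e v.1 := by
  rw [Finsupp.weight_apply, Finsupp.sum_single_index (by simp)]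
  simp [wt, e]

lemma decompose {d : Fin k → ℕ} {l : Fin k} (hd : 1 ≤ d l)
    {h : MvPolynomial (Var k n) K} (hh : h ∈ piece K k n d) :
    ∃ g : Fin (n l + 1) → MvPolynomial (Var k n) K,
      (∀ m, g m ∈ piece K k n (d - e l)) ∧
        h = ∑ m, MvPolynomial.X (⟨l, m⟩ : Var k n) * g m := by
  classical
  set pick : (Var k n →₀ ℕ) → Fin (n l + 1) := fun μ =>
    if hμ : ∃ m, μ ⟨l, m⟩ ≠ 0 then hμ.choose else 0 with hpickdef
  have hpick : ∀ μ ∈ h.support, μ ⟨l, pick μ⟩ ≠ 0 := by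
    intro μ hμ
    have hex : ∃ m, μ ⟨l, m⟩ ≠ 0 := by
      by_contra hc
      push_neg at hc
      have hw : Finsupp.weight (wt k n) μ = d := hh (MvPolynomial.mem_support_iff.1 hμ)
      have hsum : ∑ m, μ ⟨l, m⟩ = d l := by rw [← weight_wt_apply μ l, hw]
      rw [Finset.sum_congr rfl (fun m _ => hc m)] at hsum
      simp at hsum
      omega
    rw [hpickdef]
    simp only [hex, dif_pos]
    exact hex.choose_spec
  have key : ∀ μ ∈ h.support,
      μ - Finsupp.single (⟨l, pick μ⟩ : Var k n) 1 + Finsupp.single (⟨l, pick μ⟩ : Var k n) 1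
        = μ := by
    intro μ hμ
    apply tsub_add_cancel_of_le
    rw [Finsupp.single_le_iff]
    exact Nat.one_le_iff_ne_zero.2 (hpick μ hμ)
  refine ⟨fun m => ∑ μ ∈ h.support.filter (fun μ => pick μ = m),
      MvPolynomial.monomial (μ - Finsupp.single (⟨l, pick μ⟩ : Var k n) 1) (coeff μ h),
    ?_, ?_⟩
  · intro m
    apply Submodule.sum_mem
    intro μ hμf
    have hμ := (Finset.mem_filter.1 hμf).1
    have hw : Finsupp.weight (wt k n) μ = d := hh (MvPolynomial.mem_support_iff.1 hμ)
    apply isWeightedHomogeneous_monomial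
    have hsum : Finsupp.weight (wt k n) (μ - Finsupp.single (⟨l, pick μ⟩ : Var k n) 1)
        + Finsupp.weight (wt k n) (Finsupp.single (⟨l, pick μ⟩ : Var k n) 1) = d := by
      rw [← map_add, key μ hμ, hw]
    rw [weight_single_var] at hsum
    funext i
    have := congrFun hsum i
    simp only [Pi.add_apply] at this
    simp only [Pi.sub_apply]
    omega
  · rw [Finset.sum_congr rfl (fun m _ => Finset.mul_sum _ _ _)]
    have : ∀ m, ∀ μ ∈ h.support.filter (fun μ => pick μ = m),
        MvPolynomial.X (⟨l, m⟩ : Var k n) *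
          MvPolynomial.monomial (μ - Finsupp.single (⟨l, pick μ⟩ : Var k n) 1) (coeff μ h)
        = MvPolynomial.monomial μ (coeff μ h) := by
      intro m μ hμf
      obtain ⟨hμ, hpm⟩ := Finset.mem_filter.1 hμf
      rw [← hpm]
      rw [← pow_one (MvPolynomial.X (⟨l, pick μ⟩ : Var k n)), ← monomial_single_add]
      rw [add_comm, key μ hμ]
    rw [Finset.sum_congr rfl (fun m hm => Finset.sum_congr rfl (this m))]
    rw [Finset.sum_fiberwise h.support pick (fun μ => MvPolynomial.monomial μ (coeff μ h))]
    exact (support_sum_monomial_coeff h).symm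

end Decomp
lemma mem_idealPiece {K : Type} [Field K] {k : ℕ} {n : Fin k → ℕ}
    {I : Ideal (MvPolynomial (Var k n) K)} {d : Fin k → ℕ} {f : MvPolynomial (Var k n) K} :
    f ∈ idealPiece K I d ↔ f ∈ I ∧ f ∈ piece K k n d := by
  rw [idealPiece, Submodule.mem_inf, Submodule.restrictScalars_mem]

theorem no_generator_of_stable (K : Type) [Field K] [IsAlgClosed K] [CharZero K]
    (k : ℕ) (n : Fin k → ℕ) {s : ℕ} (P : Fin s → PointRep K k n)
    (hP : SPoints K P) (l : Fin k) (j : Fin k → ℕ) (hj : 2 ≤ j l)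
    (h1 : hilbert K P j = hilbert K P (j - e l))
    (h2 : hilbert K P (j - e l) = hilbert K P (j - e l - e l)) :
    idealPiece K (idealOfPoints K P) j
      = mulSpan K l (idealPiece K (idealOfPoints K P) (j - e l)) := by
  classical
  obtain ⟨lam, hlam⟩ := exists_lform P hP.1 l
  set L : MvPolynomial (Var k n) K :=
    ∑ m, MvPolynomial.C (lam m) * MvPolynomial.X (⟨l, m⟩ : Var k n) with hLdef
  have hL : L ∈ piece K k n (e l) := lform_mem_piece l lam
  have hd1 : 1 ≤ (j - e l) l := by simp only [Pi.sub_apply, e, Pi.single_eq_same]; omega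
  have he1 : e l + (j - e l) = j := e_add_sub (by omega)
  have he2 : e l + (j - e l - e l) = j - e l := e_add_sub hd1
  have hwte : ∀ m : Fin (n l + 1), wt k n (⟨l, m⟩ : Var k n) = e l := fun _ => rfl
  apply le_antisymm
  · intro h hmem
    obtain ⟨hI, hpj⟩ := mem_idealPiece.1 hmem
    obtain ⟨g, hgmem, hgdec⟩ := decompose (l := l) (by omega) hpj
    have hstep : ∀ m, ∃ f ∈ piece K k n (j - e l - e l),
        g m - L * f ∈ idealOfPoints K P := by
      intro m
      exact step_surj P l (j - e l - e l) lam hlam (by rw [he2]; exact h2)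
        (by rw [he2]; exact hgmem m)
    choose f hfmem hfI using hstep
    set q : MvPolynomial (Var k n) K := ∑ m, MvPolynomial.X (⟨l, m⟩ : Var k n) * f m
      with hqdef
    have hq : q ∈ piece K k n (j - e l) := by
      apply Submodule.sum_mem
      intro m _
      have := (isWeightedHomogeneous_X K (wt k n) (⟨l, m⟩ : Var k n)).mul (hfmem m)
      rw [hwte m, he2] at this
      exact this
    have hLf_piece : ∀ m, L * f m ∈ piece K k n (j - e l) := by
      intro m
      have := hL.mul (hfmem m)
      rw [he2] at this
      exact this
    have e1 : ∑ m, MvPolynomial.X (⟨l, m⟩ : Var k n) * (g m - L * f m)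
        = (∑ m, MvPolynomial.X (⟨l, m⟩ : Var k n) * g m) - L * q := by
      rw [hqdef, Finset.mul_sum, ← Finset.sum_sub_distrib]
      exact Finset.sum_congr rfl fun m _ => by ring
    have e2 : ∑ m, MvPolynomial.X (⟨l, m⟩ : Var k n) * (lam m • q) = L * q := by
      rw [hLdef, Finset.sum_mul]
      exact Finset.sum_congr rfl fun m _ => by rw [smul_eq_C_mul]; ring
    have hLq : L * q ∈ idealOfPoints K P := by
      have hrw : L * q = h - ∑ m, MvPolynomial.X (⟨l, m⟩ : Var k n) * (g m - L * f m) := by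
        rw [e1, hgdec]; ring
      rw [hrw]
      exact Ideal.sub_mem _ hI <| Ideal.sum_mem _ fun m _ => Ideal.mul_mem_left _ _ (hfI m)
    have hqI : q ∈ idealOfPoints K P := by
      rw [mem_ideal_iff hq]
      intro a
      have hLqp : L * q ∈ piece K k n j := by
        have := hL.mul hq; rw [he1] at this; exact this
      have h0 := (mem_ideal_iff hLqp).1 hLq a
      rw [map_mul, hLdef, eval_lform] at h0
      rcases mul_eq_zero.1 h0 with h' | h'
      · exact absurd h' (hlam a)
      · exact h'
    have hfin : h = ∑ m, MvPolynomial.X (⟨l, m⟩ : Var k n) * (g m - L * f m)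
        + ∑ m, MvPolynomial.X (⟨l, m⟩ : Var k n) * (lam m • q) := by
      rw [e1, e2, hgdec]; ring
    rw [hfin]
    apply Submodule.add_mem
    · apply Submodule.sum_mem
      intro m _
      apply Submodule.subset_span
      refine ⟨m, g m - L * f m, ?_, rfl⟩
      exact mem_idealPiece.2 ⟨hfI m, Submodule.sub_mem _ (hgmem m) (hLf_piece m)⟩
    · apply Submodule.sum_mem
      intro m _
      apply Submodule.subset_span
      refine ⟨m, lam m • q, ?_, rfl⟩
      rw [mem_idealPiece]
      constructor
      · rw [smul_eq_C_mul]
        exact Ideal.mul_mem_left _ _ hqI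
      · exact Submodule.smul_mem _ _ hq
  · rw [mulSpan]
    apply Submodule.span_le.2
    rintro x ⟨m, f0, hf0, rfl⟩
    obtain ⟨hf0I, hf0p⟩ := mem_idealPiece.1 hf0
    rw [SetLike.mem_coe, mem_idealPiece]
    constructor
    · exact Ideal.mul_mem_left _ _ hf0I
    · have := (isWeightedHomogeneous_X K (wt k n) (⟨l, m⟩ : Var k n)).mul hf0p
      rw [hwte m, he1] at this
      exact this

end MultiProjPoints
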